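/- Let μ, ν be σ-finite lower continuous monotone measures with ν null-additive, witnessed by Uₙ ↑ U with μ(Uₙ), ν(Uₙ) < ∞. If (μ, ν) has the decomposition property w.r.t. {A_α}_{α∈ℚ≥0} and lim_{α→∞} max(μ(A_α ∩ Uₙ), ν(A_α ∩ Uₙ)) = 0 for each n, then there exists a nonnegative measurable function f, finite ν-a.e., such that μ(A) = ∫_A f dν for all measurable A; moreover f is unique up to ν-null sets. -/

import Mathlib

open MeasureTheory Filter Set
open scoped NNReal ENNReal NNRat

variable {U : Type*}

/-- The Choquet integral of `f` w.r.t. the set function `ν` on the set `A`: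
`∫₀^∞ ν({f ≥ t} ∩ A) dt`. -/
noncomputable def Choquet [MeasurableSpace U] (ν : Set U → ENNReal) (f : U → ENNReal)
    (A : Set U) : ENNReal :=
  ∫⁻ t in Set.Ioi (0 : ℝ), ν ({x | ENNReal.ofReal t ≤ f x} ∩ A)

/-- A monotone measure: vanishes at `∅` and is monotone on measurable sets. -/
def IsMonotoneMeasure [MeasurableSpace U] (ν : Set U → ENNReal) : Prop :=
  ν ∅ = 0 ∧ ∀ A B : Set U, MeasurableSet A → MeasurableSet B → A ⊆ B → ν A ≤ ν B

/-- The decomposition inequalities for the ordered pair `(μ, ν)` w.r.t. a family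
`A : NNRat → Set U`, stated additively (no truncated subtraction):
`α(ν(S∩A_α) − ν(S∩A_β)) ≤ μ(S∩A_α) − μ(S∩A_β) ≤ β(ν(S∩A_α) − ν(S∩A_β))`
for all measurable `S` of finite `μ`- and `ν`-measure and rationals `α < β`. -/
def DecompIneq [MeasurableSpace U] (μ ν : Set U → ENNReal) (A : NNRat → Set U) : Prop :=
  ∀ S : Set U, MeasurableSet S → μ S ≠ ⊤ → ν S ≠ ⊤ →
    ∀ α β : NNRat, α < β →
      (((α : ℝ≥0) : ENNReal) * ν (S ∩ A α) + μ (S ∩ A β)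
          ≤ μ (S ∩ A α) + ((α : ℝ≥0) : ENNReal) * ν (S ∩ A β)) ∧
      (μ (S ∩ A α) + ((β : ℝ≥0) : ENNReal) * ν (S ∩ A β)
          ≤ ((β : ℝ≥0) : ENNReal) * ν (S ∩ A α) + μ (S ∩ A β))

/-- The decomposition property: a decreasing family of measurable sets with `A 0 = univ`
satisfying the decomposition inequalities. -/
def DecompProp [MeasurableSpace U] (μ ν : Set U → ENNReal) (A : NNRat → Set U) : Prop :=
  (∀ α, MeasurableSet (A α)) ∧ A 0 = Set.univ ∧ Antitone A ∧ DecompIneq μ ν A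

/-- Comonotonicity for `ℝ≥0∞`-valued functions. -/
def Comonotone (f g : U → ENNReal) : Prop :=
  ∀ s t : U, (f s ≤ f t ∧ g s ≤ g t) ∨ (f t ≤ f s ∧ g t ≤ g s)


namespace RNAux

instance : Countable ℚ≥0 := by
  have : Function.Injective ((↑) : ℚ≥0 → ℚ) := fun a b h => Subtype.ext h
  exact this.countable

lemma accumulate_succ' {β : Type*} (B : ℕ → Set β) (n : ℕ) :
    Set.accumulate B (n + 1) = Set.accumulate B n ∪ B (n + 1) := by
  ext z
  simp only [Set.mem_accumulate, Nat.le_succ_iff, mem_union]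
  constructor
  · rintro ⟨y, hy | rfl, hz⟩
    · exact Or.inl ⟨y, hy, hz⟩
    · exact Or.inr hz
  · rintro (⟨y, hy, hz⟩ | hz)
    · exact ⟨y, Or.inl hy, hz⟩
    · exact ⟨n + 1, Or.inr rfl, hz⟩

/-- The candidate density: `f x = sup {α | x ∈ A α}`. -/
noncomputable def rnf (A : NNRat → Set U) : U → ℝ≥0∞ :=
  fun x => ⨆ α : NNRat, (A α).indicator (fun _ => ((α : ℝ≥0) : ℝ≥0∞)) x

lemma rnf_measurable [MeasurableSpace U] {A : NNRat → Set U} (hA : ∀ α, MeasurableSet (A α)) :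
    Measurable (rnf A) :=
  Measurable.iSup fun α => measurable_const.indicator (hA α)

lemma le_rnf {A : NNRat → Set U} {α : NNRat} {x : U} (hx : x ∈ A α) :
    ((α : ℝ≥0) : ℝ≥0∞) ≤ rnf A x :=
  le_iSup_of_le α (by simp [Set.indicator_of_mem hx])

lemma mem_of_lt_rnf {A : NNRat → Set U} (hA : Antitone A) {α : NNRat} {x : U}
    (h : ((α : ℝ≥0) : ℝ≥0∞) < rnf A x) : x ∈ A α := by
  rw [rnf, lt_iSup_iff] at h
  obtain ⟨β, hβ⟩ := h
  by_cases hx : x ∈ A β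
  · rw [Set.indicator_of_mem hx] at hβ
    have : α ≤ β := by exact_mod_cast hβ.le
    exact hA this hx
  · rw [Set.indicator_of_notMem hx] at hβ
    exact absurd hβ (by simp)

lemma level_subset_A {A : NNRat → Set U} (hA : Antitone A) {α : NNRat} {t : ℝ}
    (hαt : ((α : ℝ≥0) : ℝ) < t) :
    {x | ENNReal.ofReal t ≤ rnf A x} ⊆ A α := by
  intro x hx
  apply mem_of_lt_rnf hA
  refine lt_of_lt_of_le ?_ hx
  rw [← ENNReal.ofReal_coe_nnreal]
  exact (ENNReal.ofReal_lt_ofReal_iff (lt_of_le_of_lt (α : ℝ≥0).coe_nonneg hαt)).2 hαt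

lemma A_subset_level {A : NNRat → Set U} {β : NNRat} {t : ℝ} (ht : t ≤ ((β : ℝ≥0) : ℝ)) :
    A β ⊆ {x | ENNReal.ofReal t ≤ rnf A x} := by
  intro x hx
  have h1 : ENNReal.ofReal t ≤ ((β : ℝ≥0) : ℝ≥0∞) := by
    rw [← ENNReal.ofReal_coe_nnreal]
    exact ENNReal.ofReal_le_ofReal ht
  exact h1.trans (le_rnf hx)

lemma null_iUnion_nat [MeasurableSpace U] {ν : Set U → ENNReal}
    (hνlc : ∀ A : ℕ → Set U, (∀ n, MeasurableSet (A n)) → Monotone A →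
      Tendsto (fun n => ν (A n)) atTop (nhds (ν (⋃ n, A n))))
    (hνna : ∀ A N : Set U, MeasurableSet A → MeasurableSet N → ν N = 0 → ν (A ∪ N) = ν A)
    {B : ℕ → Set U} (hB : ∀ n, MeasurableSet (B n)) (h0 : ∀ n, ν (B n) = 0) :
    ν (⋃ n, B n) = 0 := by
  have hacc : ∀ n, MeasurableSet (Set.accumulate B n) := fun n =>
    MeasurableSet.biUnion (Set.to_countable _) fun i _ => hB i
  have hz : ∀ n, ν (Set.accumulate B n) = 0 := by
    intro n
    induction n with
    | zero => simpa [Set.accumulate] using h0 0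
    | succ n ih =>
      rw [accumulate_succ' B n, hνna _ _ (hacc n) (hB (n + 1)) (h0 (n + 1))]
      exact ih
  have h1 := hνlc (Set.accumulate B) hacc monotone_accumulate
  rw [Set.iUnion_accumulate] at h1
  have h2 : Tendsto (fun _ : ℕ => (0 : ℝ≥0∞)) atTop (nhds (ν (⋃ n, B n))) := by
    simpa [hz] using h1
  exact tendsto_nhds_unique h2 tendsto_const_nhds

lemma null_iUnion [MeasurableSpace U] {ν : Set U → ENNReal} (hν0 : ν ∅ = 0)
    (hνlc : ∀ A : ℕ → Set U, (∀ n, MeasurableSet (A n)) → Monotone A →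
      Tendsto (fun n => ν (A n)) atTop (nhds (ν (⋃ n, A n))))
    (hνna : ∀ A N : Set U, MeasurableSet A → MeasurableSet N → ν N = 0 → ν (A ∪ N) = ν A)
    {ι : Type} [Countable ι] {B : ι → Set U}
    (hB : ∀ i, MeasurableSet (B i)) (h0 : ∀ i, ν (B i) = 0) : ν (⋃ i, B i) = 0 := by
  rcases isEmpty_or_nonempty ι with h | h
  · simp [iUnion_of_empty, hν0]
  · obtain ⟨e, he⟩ := exists_surjective_nat ι
    rw [← he.iUnion_comp B]
    exact null_iUnion_nat hνlc hνna (fun n => hB (e n)) fun n => h0 (e n)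


variable {A : NNRat → Set U}

set_option maxHeartbeats 1000000 in
lemma repr_core [MeasurableSpace U] {μ ν : Set U → ENNReal}
    (hμ : IsMonotoneMeasure μ) (hν : IsMonotoneMeasure ν)
    (hd : DecompProp μ ν A)
    {S : Set U} (hS : MeasurableSet S) (hSμ : μ S ≠ ⊤) (hSν : ν S ≠ ⊤)
    (hμtail : Tendsto (fun α : NNRat => μ (S ∩ A α)) atTop (nhds 0))
    (hνtail : Tendsto (fun α : NNRat => ν (S ∩ A α)) atTop (nhds 0)) :
    μ S = ∫⁻ t in Set.Ioi (0 : ℝ), ν ({x | ENNReal.ofReal t ≤ rnf A x} ∩ S) := by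
  obtain ⟨hAm, hA0, hAanti, hdec⟩ := hd
  have hfm : Measurable (rnf A) := rnf_measurable hAm
  set G : ℝ → ℝ≥0∞ := fun t => ν ({x | ENNReal.ofReal t ≤ rnf A x} ∩ S) with hG
  have hlev : ∀ t : ℝ, MeasurableSet {x | ENNReal.ofReal t ≤ rnf A x} := fun t =>
    hfm measurableSet_Ici
  have hGle : ∀ t, G t ≤ ν S := fun t =>
    hν.2 _ _ ((hlev t).inter hS) hS inter_subset_right
  have hGanti : Antitone G := by
    intro s t hst
    exact hν.2 _ _ ((hlev t).inter hS) ((hlev s).inter hS)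
      (inter_subset_inter_left _ (fun x hx => le_trans (ENNReal.ofReal_le_ofReal hst) hx))
  have hGmeas : Measurable G := hGanti.measurable
  have hGub : ∀ (α : NNRat) (t : ℝ), ((α : ℝ≥0) : ℝ) < t → G t ≤ ν (S ∩ A α) := by
    intro α t hαt
    exact hν.2 _ _ ((hlev t).inter hS) (hS.inter (hAm α))
      (fun x hx => ⟨hx.2, level_subset_A hAanti hαt hx.1⟩)
  have hGlb : ∀ (β : NNRat) (t : ℝ), t ≤ ((β : ℝ≥0) : ℝ) → ν (S ∩ A β) ≤ G t := by
    intro β t ht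
    exact hν.2 _ _ (hS.inter (hAm β)) ((hlev t).inter hS)
      (fun x hx => ⟨A_subset_level ht hx.2, hx.1⟩)
  have hμfin : ∀ α, μ (S ∩ A α) ≠ ⊤ := fun α =>
    ne_top_of_le_ne_top hSμ (hμ.2 _ _ (hS.inter (hAm α)) hS inter_subset_left)
  have hνfin : ∀ α, ν (S ∩ A α) ≠ ⊤ := fun α =>
    ne_top_of_le_ne_top hSν (hν.2 _ _ (hS.inter (hAm α)) hS inter_subset_left)
  -- key : α · ν(S ∩ Aα) ≤ μ(S ∩ Aα)
  have hkey : ∀ α : NNRat, ((α : ℝ≥0) : ℝ≥0∞) * ν (S ∩ A α) ≤ μ (S ∩ A α) := by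
    intro α
    have h1 : Tendsto (fun β : NNRat => ((α : ℝ≥0) : ℝ≥0∞) * ν (S ∩ A β)) atTop (nhds 0) := by
      simpa using ENNReal.Tendsto.const_mul hνtail (Or.inr ENNReal.coe_ne_top)
    have hlim : Tendsto (fun β : NNRat => μ (S ∩ A α) + ((α : ℝ≥0) : ℝ≥0∞) * ν (S ∩ A β))
        atTop (nhds (μ (S ∩ A α))) := by
      simpa using Tendsto.const_add (μ (S ∩ A α)) h1
    refine ge_of_tendsto hlim ?_
    filter_upwards [eventually_gt_atTop α] with β hβ
    calc ((α : ℝ≥0) : ℝ≥0∞) * ν (S ∩ A α)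
        ≤ ((α : ℝ≥0) : ℝ≥0∞) * ν (S ∩ A α) + μ (S ∩ A β) := le_self_add
      _ ≤ μ (S ∩ A α) + ((α : ℝ≥0) : ℝ≥0∞) * ν (S ∩ A β) := (hdec S hS hSμ hSν α β hβ).1
  -- finiteness of the truncated integrals
  have hTEfin : ∀ N : ℕ, (∫⁻ t in Ioc (0 : ℝ) (N : ℝ), G t) ≠ ⊤ := by
    intro N
    have h1 : (∫⁻ t in Ioc (0 : ℝ) (N : ℝ), G t) ≤ ν S * volume (Ioc (0 : ℝ) (N : ℝ)) := by
      calc (∫⁻ t in Ioc (0 : ℝ) (N : ℝ), G t) ≤ ∫⁻ _ in Ioc (0 : ℝ) (N : ℝ), ν S :=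
            lintegral_mono fun t => hGle t
        _ = ν S * volume (Ioc (0 : ℝ) (N : ℝ)) := setLIntegral_const _ _
    exact ne_top_of_le_ne_top (ENNReal.mul_ne_top hSν (by simp [Real.volume_Ioc])) h1
  -- main quantitative estimate
  have main : ∀ N k : ℕ, k ≠ 0 →
      (μ S).toReal ≤ (μ (S ∩ A (N : ℚ≥0))).toReal + 1 / (k : ℝ) * (ν S).toReal +
        (∫⁻ t in Ioc (0 : ℝ) (N : ℝ), G t).toReal ∧
      (∫⁻ t in Ioc (0 : ℝ) (N : ℝ), G t).toReal ≤ 1 / (k : ℝ) * (ν S).toReal + (μ S).toReal := by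
    intro N k hk
    have hkQ : ((k : ℚ≥0)) ≠ 0 := by exact_mod_cast hk
    have hkR : ((k : ℝ)) ≠ 0 := by exact_mod_cast hk
    set q : ℕ → ℚ≥0 := fun i => (i : ℚ≥0) / (k : ℚ≥0) with hqdef
    set p : ℕ → ℝ := fun i => ((q i : ℝ≥0) : ℝ) with hpdef
    have hq0 : q 0 = 0 := by simp [hqdef]
    have hp0 : p 0 = 0 := by simp [hpdef, hq0]
    have hqsucc : ∀ i, q i < q (i + 1) := by
      intro i
      apply div_lt_div_of_pos_right ?_ ?_
      · exact_mod_cast Nat.lt_succ_self i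
      · exact_mod_cast Nat.pos_of_ne_zero hk
    have hpsucc : ∀ i, p (i + 1) = p i + 1 / (k : ℝ) := by
      intro i
      simp only [hpdef, hqdef]
      push_cast
      field_simp
    have hpnn : ∀ i, 0 ≤ p i := fun i => (q i : ℝ≥0).coe_nonneg
    have hplt : ∀ i, p i < p (i + 1) := by
      intro i
      rw [hpsucc i]
      have : 0 < 1 / (k : ℝ) := by positivity
      linarith
    set m := N * k with hm
    have hqm : q m = (N : ℚ≥0) := by
      simp only [hqdef, hm]
      push_cast
      field_simp
    have hpm : p m = (N : ℝ) := by
      simp only [hpdef, hqm]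
      push_cast
      ring
    set w : ℕ → ℝ := fun i => (ν (S ∩ A (q i))).toReal with hw
    set mm : ℕ → ℝ := fun i => (μ (S ∩ A (q i))).toReal with hmm
    set J : ℕ → ℝ≥0∞ := fun i => ∫⁻ t in Ioc (p i) (p (i + 1)), G t with hJ
    have hwnn : ∀ i, 0 ≤ w i := fun i => ENNReal.toReal_nonneg
    have hvol : ∀ i, volume (Ioc (p i) (p (i + 1))) = ENNReal.ofReal (1 / (k : ℝ)) := by
      intro i
      rw [Real.volume_Ioc, hpsucc i]
      ring_nf
    have hJub : ∀ i, J i ≤ ν (S ∩ A (q i)) * ENNReal.ofReal (1 / (k : ℝ)) := by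
      intro i
      calc J i ≤ ∫⁻ _ in Ioc (p i) (p (i + 1)), ν (S ∩ A (q i)) := by
            refine setLIntegral_mono' measurableSet_Ioc fun t ht => hGub (q i) t ht.1
        _ = ν (S ∩ A (q i)) * volume (Ioc (p i) (p (i + 1))) := setLIntegral_const _ _
        _ = _ := by rw [hvol i]
    have hJlb : ∀ i, ν (S ∩ A (q (i + 1))) * ENNReal.ofReal (1 / (k : ℝ)) ≤ J i := by
      intro i
      calc ν (S ∩ A (q (i + 1))) * ENNReal.ofReal (1 / (k : ℝ))
          = ∫⁻ _ in Ioc (p i) (p (i + 1)), ν (S ∩ A (q (i + 1))) := by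
            rw [setLIntegral_const, hvol i]
        _ ≤ J i := setLIntegral_mono' measurableSet_Ioc fun t ht => hGlb (q (i + 1)) t ht.2
    have hJfin : ∀ i, J i ≠ ⊤ := fun i =>
      ne_top_of_le_ne_top (ENNReal.mul_ne_top (hνfin _) ENNReal.ofReal_ne_top) (hJub i)
    -- real versions
    have hJrub : ∀ i, (J i).toReal ≤ 1 / (k : ℝ) * w i := by
      intro i
      have := ENNReal.toReal_mono (ENNReal.mul_ne_top (hνfin _) ENNReal.ofReal_ne_top) (hJub i)
      rwa [ENNReal.toReal_mul, ENNReal.toReal_ofReal (by positivity), mul_comm] at this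
    have hJrlb : ∀ i, 1 / (k : ℝ) * w (i + 1) ≤ (J i).toReal := by
      intro i
      have := ENNReal.toReal_mono (hJfin i) (hJlb i)
      rwa [ENNReal.toReal_mul, ENNReal.toReal_ofReal (by positivity), mul_comm] at this
    -- decomposition inequalities, real form
    have hcoe : ∀ i, (((q i : ℝ≥0) : ℝ≥0∞)).toReal = p i := fun i => rfl
    have hdR : ∀ i, p i * (w i - w (i + 1)) ≤ mm i - mm (i + 1) ∧
        mm i - mm (i + 1) ≤ p (i + 1) * (w i - w (i + 1)) := by
      intro i
      obtain ⟨h1, h2⟩ := hdec S hS hSμ hSν (q i) (q (i + 1)) (hqsucc i)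
      have f1 : ∀ j l : ℕ, (((q j : ℝ≥0) : ℝ≥0∞) * ν (S ∩ A (q l))).toReal = p j * w l := by
        intro j l
        rw [ENNReal.toReal_mul]
        rfl
      have e1 := ENNReal.toReal_mono
        (ENNReal.add_ne_top.2 ⟨hμfin _, ENNReal.mul_ne_top ENNReal.coe_ne_top (hνfin _)⟩) h1
      have e2 := ENNReal.toReal_mono
        (ENNReal.add_ne_top.2 ⟨ENNReal.mul_ne_top ENNReal.coe_ne_top (hνfin _), hμfin _⟩) h2
      rw [ENNReal.toReal_add (ENNReal.mul_ne_top ENNReal.coe_ne_top (hνfin _)) (hμfin _),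
        ENNReal.toReal_add (hμfin _) (ENNReal.mul_ne_top ENNReal.coe_ne_top (hνfin _)),
        f1 i i, f1 i (i + 1)] at e1
      rw [ENNReal.toReal_add (hμfin _) (ENNReal.mul_ne_top ENNReal.coe_ne_top (hνfin _)),
        ENNReal.toReal_add (ENNReal.mul_ne_top ENNReal.coe_ne_top (hνfin _)) (hμfin _),
        f1 (i + 1) (i + 1), f1 (i + 1) i] at e2
      constructor <;> [skip; skip] <;> simp only [hmm] <;> nlinarith [e1, e2]
    -- splitting the integral
    have hsplit : ∀ m' : ℕ, (∫⁻ t in Ioc (0 : ℝ) (p m'), G t) = ∑ i ∈ Finset.range m', J i := by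
      intro m'
      induction m' with
      | zero => simp [hp0]
      | succ n ih =>
        rw [Finset.sum_range_succ, ← ih,
          ← Set.Ioc_union_Ioc_eq_Ioc (hpnn n) (hplt n).le,
          lintegral_union measurableSet_Ioc (Set.Ioc_disjoint_Ioc_of_le le_rfl)]
    have hTfin : (∫⁻ t in Ioc (0 : ℝ) (p m), G t) ≠ ⊤ := by rw [hpm]; exact hTEfin N
    have hSig : (∫⁻ t in Ioc (0 : ℝ) (p m), G t).toReal = ∑ i ∈ Finset.range m, (J i).toReal := by
      rw [hsplit m, ENNReal.toReal_sum fun i _ => hJfin i]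
    have tele : ∑ i ∈ Finset.range m, (mm i - mm (i + 1)) = mm 0 - mm m :=
      Finset.sum_range_sub' mm m
    have abel1 : ∑ i ∈ Finset.range m, p (i + 1) * (w i - w (i + 1))
        = (p 0 * w 0 - p m * w m) + 1 / (k : ℝ) * ∑ i ∈ Finset.range m, w i := by
      have e : ∀ i, p (i + 1) * (w i - w (i + 1))
          = (p i * w i - p (i + 1) * w (i + 1)) + 1 / (k : ℝ) * w i := by
        intro i; rw [hpsucc i]; ring
      rw [Finset.sum_congr rfl fun i _ => e i, Finset.sum_add_distrib,
        Finset.sum_range_sub' (fun i => p i * w i), Finset.mul_sum]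
    have abel2 : ∑ i ∈ Finset.range m, p i * (w i - w (i + 1))
        = (p 0 * w 0 - p m * w m) + 1 / (k : ℝ) * ∑ i ∈ Finset.range m, w (i + 1) := by
      have e : ∀ i, p i * (w i - w (i + 1))
          = (p i * w i - p (i + 1) * w (i + 1)) + 1 / (k : ℝ) * w (i + 1) := by
        intro i; rw [hpsucc i]; ring
      rw [Finset.sum_congr rfl fun i _ => e i, Finset.sum_add_distrib,
        Finset.sum_range_sub' (fun i => p i * w i), Finset.mul_sum]
    have hshift : ∀ m' : ℕ, ∑ i ∈ Finset.range m', w i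
        ≤ w 0 + ∑ i ∈ Finset.range m', w (i + 1) := by
      intro m'
      cases m' with
      | zero => simpa using hwnn 0
      | succ n =>
        rw [Finset.sum_range_succ' w n]
        have h1 : ∑ i ∈ Finset.range n, w (i + 1) ≤ ∑ i ∈ Finset.range (n + 1), w (i + 1) :=
          Finset.sum_le_sum_of_subset_of_nonneg
            (Finset.range_subset_range.2 (Nat.le_succ n)) (fun i _ _ => hwnn (i + 1))
        linarith
    have hsum_lb : 1 / (k : ℝ) * ∑ i ∈ Finset.range m, w (i + 1)
        ≤ ∑ i ∈ Finset.range m, (J i).toReal := by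
      rw [Finset.mul_sum]; exact Finset.sum_le_sum fun i _ => hJrlb i
    have hsum_ub : ∑ i ∈ Finset.range m, (J i).toReal
        ≤ 1 / (k : ℝ) * ∑ i ∈ Finset.range m, w i := by
      rw [Finset.mul_sum]; exact Finset.sum_le_sum fun i _ => hJrub i
    have hpmwm : p m * w m ≤ mm m := by
      have h1 := ENNReal.toReal_mono (hμfin (q m)) (hkey (q m))
      rwa [ENNReal.toReal_mul] at h1
    have hU : mm 0 - mm m ≤ (p 0 * w 0 - p m * w m) + 1 / (k : ℝ) * ∑ i ∈ Finset.range m, w i := by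
      rw [← abel1, ← tele]
      exact Finset.sum_le_sum fun i _ => (hdR i).2
    have hL : (p 0 * w 0 - p m * w m) + 1 / (k : ℝ) * ∑ i ∈ Finset.range m, w (i + 1)
        ≤ mm 0 - mm m := by
      rw [← abel2, ← tele]
      exact Finset.sum_le_sum fun i _ => (hdR i).1
    have hmm0 : mm 0 = (μ S).toReal := by
      simp only [hmm, hq0, hA0, inter_univ]
    have hw0 : w 0 = (ν S).toReal := by
      simp only [hw, hq0, hA0, inter_univ]
    have hmmN : mm m = (μ (S ∩ A (N : ℚ≥0))).toReal := by simp only [hmm]; rw [hqm]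
    have hkpos : (0 : ℝ) ≤ 1 / (k : ℝ) := by positivity
    have hp0w : p 0 * w 0 = 0 := by rw [hp0]; ring
    have hpw0 : 0 ≤ p m * w m := mul_nonneg (hpnn m) (hwnn m)
    have hTval : (∫⁻ t in Ioc (0 : ℝ) (N : ℝ), G t).toReal
        = ∑ i ∈ Finset.range m, (J i).toReal := by rw [← hpm, hSig]
    have h3 : 1 / (k : ℝ) * ∑ i ∈ Finset.range m, w i
        ≤ 1 / (k : ℝ) * w 0 + 1 / (k : ℝ) * ∑ i ∈ Finset.range m, w (i + 1) := by
      have h4 := mul_le_mul_of_nonneg_left (hshift m) hkpos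
      rwa [mul_add] at h4
    constructor
    · rw [← hmm0, ← hmmN, hTval, ← hw0]
      linarith [hsum_lb, hU, h3, hp0w, hpw0]
    · rw [← hmm0, hTval, ← hw0]
      linarith [hsum_ub, hL, h3, hp0w, hpmwm]
  -- let k → ∞ for fixed N
  have hstep : ∀ N : ℕ,
      (μ S).toReal ≤ (μ (S ∩ A (N : ℚ≥0))).toReal + (∫⁻ t in Ioc (0 : ℝ) (N : ℝ), G t).toReal ∧
      (∫⁻ t in Ioc (0 : ℝ) (N : ℝ), G t).toReal ≤ (μ S).toReal := by
    intro N
    have hk0 : Tendsto (fun k : ℕ => 1 / (k : ℝ) * (ν S).toReal) atTop (nhds 0) := by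
      simpa using tendsto_one_div_atTop_nhds_zero_nat.mul_const ((ν S).toReal)
    constructor
    · have hlim : Tendsto (fun k : ℕ => (μ (S ∩ A (N : ℚ≥0))).toReal + 1 / (k : ℝ) * (ν S).toReal
          + (∫⁻ t in Ioc (0 : ℝ) (N : ℝ), G t).toReal) atTop
          (nhds ((μ (S ∩ A (N : ℚ≥0))).toReal + 0 + (∫⁻ t in Ioc (0 : ℝ) (N : ℝ), G t).toReal)) :=
        (tendsto_const_nhds.add hk0).add tendsto_const_nhds
      have hev : ∀ᶠ k : ℕ in atTop, (μ S).toReal ≤ (μ (S ∩ A (N : ℚ≥0))).toReal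
          + 1 / (k : ℝ) * (ν S).toReal + (∫⁻ t in Ioc (0 : ℝ) (N : ℝ), G t).toReal := by
        filter_upwards [eventually_ge_atTop 1] with k hk
        exact (main N k (by omega)).1
      have h1 := ge_of_tendsto hlim hev
      simpa using h1
    · have hlim : Tendsto (fun k : ℕ => 1 / (k : ℝ) * (ν S).toReal + (μ S).toReal) atTop
          (nhds (0 + (μ S).toReal)) := hk0.add tendsto_const_nhds
      have hev : ∀ᶠ k : ℕ in atTop, (∫⁻ t in Ioc (0 : ℝ) (N : ℝ), G t).toReal
          ≤ 1 / (k : ℝ) * (ν S).toReal + (μ S).toReal := by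
        filter_upwards [eventually_ge_atTop 1] with k hk
        exact (main N k (by omega)).2
      have h1 := ge_of_tendsto hlim hev
      simpa using h1
  have hN2e : ∀ N : ℕ, (∫⁻ t in Ioc (0 : ℝ) (N : ℝ), G t) ≤ μ S := fun N =>
    (ENNReal.toReal_le_toReal (hTEfin N) hSμ).1 (hstep N).2
  have hN1e : ∀ N : ℕ, μ S ≤ μ (S ∩ A (N : ℚ≥0)) + ∫⁻ t in Ioc (0 : ℝ) (N : ℝ), G t := by
    intro N
    have hfin : μ (S ∩ A (N : ℚ≥0)) + (∫⁻ t in Ioc (0 : ℝ) (N : ℝ), G t) ≠ ⊤ :=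
      ENNReal.add_ne_top.2 ⟨hμfin _, hTEfin N⟩
    refine (ENNReal.toReal_le_toReal hSμ hfin).1 ?_
    rw [ENNReal.toReal_add (hμfin _) (hTEfin N)]
    exact (hstep N).1
  have hmono : Monotone (fun N : ℕ => ∫⁻ t in Ioc (0 : ℝ) (N : ℝ), G t) := by
    intro a b hab
    exact lintegral_mono_set (Ioc_subset_Ioc_right (by exact_mod_cast hab))
  have hmono2 : Monotone (fun (n : ℕ) (t : ℝ) => (Ioc (0 : ℝ) (n : ℝ)).indicator G t) := by
    intro a b hab t
    show (Ioc (0 : ℝ) (a : ℝ)).indicator G t ≤ (Ioc (0 : ℝ) (b : ℝ)).indicator G t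
    by_cases h : t ∈ Ioc (0 : ℝ) (a : ℝ)
    · rw [Set.indicator_of_mem h, Set.indicator_of_mem
        (Set.mem_Ioc.2 ⟨h.1, h.2.trans (by exact_mod_cast hab)⟩)]
    · rw [Set.indicator_of_notMem h]; exact zero_le
  have hCho : (∫⁻ t in Ioi (0 : ℝ), G t) = ⨆ N : ℕ, ∫⁻ t in Ioc (0 : ℝ) (N : ℝ), G t := by
    rw [← lintegral_indicator measurableSet_Ioi G]
    have hptw : ∀ t, (Ioi (0 : ℝ)).indicator G t
        = ⨆ N : ℕ, (Ioc (0 : ℝ) (N : ℝ)).indicator G t := by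
      intro t
      by_cases ht : 0 < t
      · obtain ⟨N, hN⟩ := exists_nat_ge t
        apply le_antisymm
        · rw [Set.indicator_of_mem (Set.mem_Ioi.2 ht)]
          exact le_iSup_of_le N
            (le_of_eq (Set.indicator_of_mem (Set.mem_Ioc.2 ⟨ht, hN⟩) G).symm)
        · refine iSup_le fun n => ?_
          by_cases h : t ∈ Ioc (0 : ℝ) (n : ℝ)
          · rw [Set.indicator_of_mem h, Set.indicator_of_mem (Set.mem_Ioi.2 ht)]
          · rw [Set.indicator_of_notMem h]; exact zero_le
      · have h1 : t ∉ Ioi (0 : ℝ) := ht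
        have h2 : ∀ n : ℕ, (Ioc (0 : ℝ) (n : ℝ)).indicator G t = 0 := fun n =>
          Set.indicator_of_notMem (fun hc => ht hc.1) _
        rw [Set.indicator_of_notMem h1]
        simp [h2]
    rw [lintegral_congr hptw,
      lintegral_iSup (fun n => hGmeas.indicator measurableSet_Ioc) hmono2]
    exact iSup_congr fun N => lintegral_indicator measurableSet_Ioc G
  apply le_antisymm
  · have htend : Tendsto (fun N : ℕ => μ (S ∩ A (N : ℚ≥0)) + ∫⁻ t in Ioc (0 : ℝ) (N : ℝ), G t)
        atTop (nhds (0 + ∫⁻ t in Ioi (0 : ℝ), G t)) := by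
      refine Tendsto.add ?_ ?_
      · exact hμtail.comp tendsto_natCast_atTop_atTop
      · rw [hCho]; exact tendsto_atTop_iSup hmono
    have h1 := ge_of_tendsto htend (Eventually.of_forall hN1e)
    simpa using h1
  · rw [hCho]
    exact iSup_le hN2e

end RNAux

theorem radon_nikodym_sigma_finite [MeasurableSpace U] (μ ν : Set U → ENNReal)
    (hμ : IsMonotoneMeasure μ) (hν : IsMonotoneMeasure ν)
    (Un : ℕ → Set U) (hUnm : ∀ n, MeasurableSet (Un n)) (hUnmono : Monotone Un)
    (hUn : (⋃ n, Un n) = Set.univ)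
    (hμσ : ∀ n, μ (Un n) ≠ ⊤) (hνσ : ∀ n, ν (Un n) ≠ ⊤)
    (hμlc : ∀ A : ℕ → Set U, (∀ n, MeasurableSet (A n)) → Monotone A →
      Tendsto (fun n => μ (A n)) atTop (nhds (μ (⋃ n, A n))))
    (hνlc : ∀ A : ℕ → Set U, (∀ n, MeasurableSet (A n)) → Monotone A →
      Tendsto (fun n => ν (A n)) atTop (nhds (ν (⋃ n, A n))))
    (hνna : ∀ A N : Set U, MeasurableSet A → MeasurableSet N →
      ν N = 0 → ν (A ∪ N) = ν A)
    (A : NNRat → Set U) (hd : DecompProp μ ν A)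
    (ht : ∀ n, Tendsto (fun α : NNRat => max (μ (A α ∩ Un n)) (ν (A α ∩ Un n)))
      atTop (nhds 0)) :
    ∃ f : U → ENNReal, Measurable f ∧ ν {x | f x = ⊤} = 0 ∧
      (∀ S : Set U, MeasurableSet S → μ S = Choquet ν f S) ∧
      ∀ g : U → ENNReal, Measurable g →
        (∀ S : Set U, MeasurableSet S → μ S = Choquet ν g S) →
        ν {x | f x ≠ g x} = 0 := by
  obtain ⟨hAm, hA0, hAanti, hdec⟩ := hd
  set f := RNAux.rnf A with hf
  have hfm : Measurable f := RNAux.rnf_measurable hAm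
  have htails : ∀ n, Tendsto (fun α : NNRat => μ (A α ∩ Un n)) atTop (nhds 0) ∧
      Tendsto (fun α : NNRat => ν (A α ∩ Un n)) atTop (nhds 0) := by
    intro n
    constructor
    · exact tendsto_of_tendsto_of_tendsto_of_le_of_le tendsto_const_nhds (ht n)
        (fun a => zero_le) (fun a => le_max_left _ _)
    · exact tendsto_of_tendsto_of_tendsto_of_le_of_le tendsto_const_nhds (ht n)
        (fun a => zero_le) (fun a => le_max_right _ _)
  -- the set where f is infinite is null
  have htopm : MeasurableSet {x | f x = ⊤} := hfm (measurableSet_singleton ⊤)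
  have htopsub : ∀ α, {x | f x = ⊤} ⊆ A α := by
    intro α x hx
    apply RNAux.mem_of_lt_rnf hAanti
    show ((α : ℝ≥0) : ℝ≥0∞) < f x
    have hx' : f x = ⊤ := hx
    rw [hx']
    exact ENNReal.coe_lt_top
  have htopn : ∀ n, ν ({x | f x = ⊤} ∩ Un n) = 0 := by
    intro n
    have hle : ∀ α : NNRat, ν ({x | f x = ⊤} ∩ Un n) ≤ ν (A α ∩ Un n) := fun α =>
      hν.2 _ _ (htopm.inter (hUnm n)) ((hAm α).inter (hUnm n))
        (inter_subset_inter_left _ (htopsub α))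
    have h0 := ge_of_tendsto ((htails n).2) (Eventually.of_forall hle)
    exact le_antisymm h0 (zero_le)
  have htop : ν {x | f x = ⊤} = 0 := by
    have h1 : ⋃ n, ({x | f x = ⊤} ∩ Un n) = {x | f x = ⊤} := by
      rw [← inter_iUnion, hUn, inter_univ]
    rw [← h1]
    exact RNAux.null_iUnion_nat hνlc hνna (fun n => htopm.inter (hUnm n)) htopn
  -- the representation
  have hrep : ∀ S : Set U, MeasurableSet S → μ S = Choquet ν f S := by
    intro S hS
    have hper : ∀ n, μ (S ∩ Un n) = Choquet ν f (S ∩ Un n) := by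
      intro n
      have hSm : MeasurableSet (S ∩ Un n) := hS.inter (hUnm n)
      refine RNAux.repr_core hμ hν ⟨hAm, hA0, hAanti, hdec⟩ hSm
        (ne_top_of_le_ne_top (hμσ n) (hμ.2 _ _ hSm (hUnm n) inter_subset_right))
        (ne_top_of_le_ne_top (hνσ n) (hν.2 _ _ hSm (hUnm n) inter_subset_right)) ?_ ?_
      · exact tendsto_of_tendsto_of_tendsto_of_le_of_le tendsto_const_nhds ((htails n).1)
          (fun a => zero_le) (fun α => hμ.2 _ _ (hSm.inter (hAm α)) ((hAm α).inter (hUnm n))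
            (fun x hx => ⟨hx.2, hx.1.2⟩))
      · exact tendsto_of_tendsto_of_tendsto_of_le_of_le tendsto_const_nhds ((htails n).2)
          (fun a => zero_le) (fun α => hν.2 _ _ (hSm.inter (hAm α)) ((hAm α).inter (hUnm n))
            (fun x hx => ⟨hx.2, hx.1.2⟩))
    have hSun : (⋃ n, S ∩ Un n) = S := by rw [← inter_iUnion, hUn, inter_univ]
    have hμS : Tendsto (fun n => μ (S ∩ Un n)) atTop (nhds (μ S)) := by
      have h2 := hμlc (fun n => S ∩ Un n) (fun n => hS.inter (hUnm n))
        (fun a b hab => inter_subset_inter_right _ (hUnmono hab))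
      rwa [hSun] at h2
    have hμmono : Monotone (fun n => μ (S ∩ Un n)) := fun a b hab =>
      hμ.2 _ _ (hS.inter (hUnm a)) (hS.inter (hUnm b)) (inter_subset_inter_right _ (hUnmono hab))
    have hμsup : μ S = ⨆ n, μ (S ∩ Un n) :=
      tendsto_nhds_unique hμS (tendsto_atTop_iSup hμmono)
    have hlev : ∀ t : ℝ, MeasurableSet {x | ENNReal.ofReal t ≤ f x} := fun t =>
      hfm measurableSet_Ici
    have hChoSup : Choquet ν f S = ⨆ n, Choquet ν f (S ∩ Un n) := by
      have hGn_meas : ∀ n, Measurable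
          (fun t : ℝ => ν ({x | ENNReal.ofReal t ≤ f x} ∩ (S ∩ Un n))) := fun n =>
        Antitone.measurable (fun s t hst => hν.2 _ _ ((hlev t).inter (hS.inter (hUnm n)))
          ((hlev s).inter (hS.inter (hUnm n)))
          (inter_subset_inter_left _ (fun x hx => (ENNReal.ofReal_le_ofReal hst).trans hx)))
      have hGn_mono : Monotone
          (fun (n : ℕ) (t : ℝ) => ν ({x | ENNReal.ofReal t ≤ f x} ∩ (S ∩ Un n))) := by
        intro a b hab
        intro t
        exact hν.2 _ _ ((hlev t).inter (hS.inter (hUnm a))) ((hlev t).inter (hS.inter (hUnm b)))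
          (inter_subset_inter_right _ (inter_subset_inter_right _ (hUnmono hab)))
      have hptw : ∀ t : ℝ, (⨆ n, ν ({x | ENNReal.ofReal t ≤ f x} ∩ (S ∩ Un n)))
          = ν ({x | ENNReal.ofReal t ≤ f x} ∩ S) := by
        intro t
        have h1 : Tendsto (fun n => ν ({x | ENNReal.ofReal t ≤ f x} ∩ (S ∩ Un n))) atTop
            (nhds (ν (⋃ n, {x | ENNReal.ofReal t ≤ f x} ∩ (S ∩ Un n)))) :=
          hνlc _ (fun n => (hlev t).inter (hS.inter (hUnm n)))
            (fun a b hab => inter_subset_inter_right _ (inter_subset_inter_right _ (hUnmono hab)))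
        have h2 : (⋃ n, {x | ENNReal.ofReal t ≤ f x} ∩ (S ∩ Un n))
            = {x | ENNReal.ofReal t ≤ f x} ∩ S := by
          rw [← inter_iUnion, hSun]
        rw [h2] at h1
        exact tendsto_nhds_unique (tendsto_atTop_iSup (fun a b hab => hGn_mono hab t)) h1
      rw [Choquet]
      calc ∫⁻ t in Ioi (0 : ℝ), ν ({x | ENNReal.ofReal t ≤ f x} ∩ S)
          = ∫⁻ t in Ioi (0 : ℝ), ⨆ n, ν ({x | ENNReal.ofReal t ≤ f x} ∩ (S ∩ Un n)) :=
            lintegral_congr fun t => (hptw t).symm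
        _ = ⨆ n, ∫⁻ t in Ioi (0 : ℝ), ν ({x | ENNReal.ofReal t ≤ f x} ∩ (S ∩ Un n)) :=
            lintegral_iSup hGn_meas hGn_mono
        _ = ⨆ n, Choquet ν f (S ∩ Un n) := rfl
    rw [hChoSup, hμsup]
    exact iSup_congr hper
  refine ⟨f, hfm, htop, hrep, ?_⟩
  intro g hgm hgr
  have key : ∀ (f₁ f₂ : U → ℝ≥0∞), Measurable f₁ → Measurable f₂ →
      (∀ S, MeasurableSet S → μ S = Choquet ν f₁ S) →
      (∀ S, MeasurableSet S → μ S = Choquet ν f₂ S) →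
      ∀ n, ν ({x | f₂ x < f₁ x} ∩ Un n) = 0 := by
    intro f₁ f₂ h1m h2m h1r h2r n
    set B : ℚ × ℚ → Set U := fun pr =>
      if 0 ≤ pr.1 ∧ pr.1 < pr.2 then
        ({x | ENNReal.ofReal (pr.2 : ℝ) ≤ f₁ x}
          ∩ ({x | f₂ x < ENNReal.ofReal (pr.1 : ℝ)} ∩ Un n))
      else ∅ with hB
    have hBm : ∀ pr, MeasurableSet (B pr) := by
      intro pr
      simp only [hB]
      split_ifs
      · exact (h1m measurableSet_Ici).inter ((h2m measurableSet_Iio).inter (hUnm n))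
      · exact MeasurableSet.empty
    have hB0 : ∀ pr, ν (B pr) = 0 := by
      intro pr
      simp only [hB]
      split_ifs with hc
      · obtain ⟨hr0, hrq⟩ := hc
        have hr0R : (0 : ℝ) ≤ (pr.1 : ℝ) := by exact_mod_cast hr0
        have hrqR : (pr.1 : ℝ) < (pr.2 : ℝ) := by exact_mod_cast hrq
        set S := {x | ENNReal.ofReal (pr.2 : ℝ) ≤ f₁ x}
          ∩ ({x | f₂ x < ENNReal.ofReal (pr.1 : ℝ)} ∩ Un n) with hSdef
        have hSm : MeasurableSet S :=
          (h1m measurableSet_Ici).inter ((h2m measurableSet_Iio).inter (hUnm n))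
        have hSν : ν S ≠ ⊤ :=
          ne_top_of_le_ne_top (hνσ n) (hν.2 _ _ hSm (hUnm n) (fun x hx => hx.2.2))
        have hlow : ν S * ENNReal.ofReal (pr.2 : ℝ) ≤ μ S := by
          rw [h1r S hSm, Choquet]
          calc ν S * ENNReal.ofReal (pr.2 : ℝ)
              = ∫⁻ _ in Ioc (0 : ℝ) (pr.2 : ℝ), ν S := by
                rw [setLIntegral_const, Real.volume_Ioc, sub_zero]
            _ = ∫⁻ t in Ioc (0 : ℝ) (pr.2 : ℝ), ν ({x | ENNReal.ofReal t ≤ f₁ x} ∩ S) := by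
                refine setLIntegral_congr_fun measurableSet_Ioc
                  (fun t ht => ?_)
                have hsub : S ⊆ {x | ENNReal.ofReal t ≤ f₁ x} := fun x hx =>
                  le_trans (ENNReal.ofReal_le_ofReal ht.2) hx.1
                rw [Set.inter_eq_self_of_subset_right hsub]
            _ ≤ ∫⁻ t in Ioi (0 : ℝ), ν ({x | ENNReal.ofReal t ≤ f₁ x} ∩ S) :=
                lintegral_mono_set Ioc_subset_Ioi_self
        have hup : μ S ≤ ν S * ENNReal.ofReal (pr.1 : ℝ) := by
          rw [h2r S hSm, Choquet, ← Ioc_union_Ioi_eq_Ioi hr0R,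
            lintegral_union measurableSet_Ioi Set.Ioc_disjoint_Ioi_same]
          have hpart2 : (∫⁻ t in Ioi (pr.1 : ℝ), ν ({x | ENNReal.ofReal t ≤ f₂ x} ∩ S)) = 0 := by
            have hz : ∀ t ∈ Ioi (pr.1 : ℝ),
                ν ({x | ENNReal.ofReal t ≤ f₂ x} ∩ S) = (0 : ℝ≥0∞) := by
              intro t ht
              have hempty : {x | ENNReal.ofReal t ≤ f₂ x} ∩ S = ∅ := by
                ext x
                simp only [Set.mem_inter_iff, Set.mem_setOf_eq, Set.mem_empty_iff_false,
                  iff_false, not_and]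
                intro hx1 hx2
                obtain ⟨hxa, hxb, hxc⟩ := hx2
                have h3 : ENNReal.ofReal (pr.1 : ℝ) ≤ ENNReal.ofReal t :=
                  ENNReal.ofReal_le_ofReal (le_of_lt ht)
                have h4 : f₂ x < ENNReal.ofReal (pr.1 : ℝ) := hxb
                exact absurd (lt_of_lt_of_le (lt_of_lt_of_le h4 h3) hx1) (lt_irrefl _)
              rw [hempty, hν.1]
            rw [setLIntegral_congr_fun measurableSet_Ioi hz]
            simp
          have hpart1 : (∫⁻ t in Ioc (0 : ℝ) (pr.1 : ℝ), ν ({x | ENNReal.ofReal t ≤ f₂ x} ∩ S))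
              ≤ ν S * ENNReal.ofReal (pr.1 : ℝ) := by
            calc (∫⁻ t in Ioc (0 : ℝ) (pr.1 : ℝ), ν ({x | ENNReal.ofReal t ≤ f₂ x} ∩ S))
                ≤ ∫⁻ _ in Ioc (0 : ℝ) (pr.1 : ℝ), ν S :=
                  setLIntegral_mono' measurableSet_Ioc fun t _ =>
                    hν.2 _ _ ((h2m measurableSet_Ici).inter hSm) hSm inter_subset_right
              _ = ν S * ENNReal.ofReal (pr.1 : ℝ) := by
                  rw [setLIntegral_const, Real.volume_Ioc, sub_zero]
          calc (∫⁻ t in Ioc (0 : ℝ) (pr.1 : ℝ), ν ({x | ENNReal.ofReal t ≤ f₂ x} ∩ S))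
                + (∫⁻ t in Ioi (pr.1 : ℝ), ν ({x | ENNReal.ofReal t ≤ f₂ x} ∩ S))
              = ∫⁻ t in Ioc (0 : ℝ) (pr.1 : ℝ), ν ({x | ENNReal.ofReal t ≤ f₂ x} ∩ S) := by
                rw [hpart2, add_zero]
            _ ≤ ν S * ENNReal.ofReal (pr.1 : ℝ) := hpart1
        by_contra hν0
        have h5 : ENNReal.ofReal (pr.2 : ℝ) ≤ ENNReal.ofReal (pr.1 : ℝ) :=
          (ENNReal.mul_le_mul_iff_right hν0 hSν).1 (hlow.trans hup)
        have h6 : (pr.2 : ℝ) ≤ (pr.1 : ℝ) :=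
          (ENNReal.ofReal_le_ofReal_iff hr0R).1 h5
        linarith
      · exact hν.1
    have hcover : {x | f₂ x < f₁ x} ∩ Un n ⊆ ⋃ pr, B pr := by
      rintro x ⟨hlt, hxU⟩
      obtain ⟨ρ, hρ0, h1, h2⟩ := ENNReal.lt_iff_exists_rat_btwn.1 hlt
      obtain ⟨σ, hσ0, g1, g2⟩ := ENNReal.lt_iff_exists_rat_btwn.1 h1
      have hσρ : σ < ρ := by
        have h3 : (σ : ℝ).toNNReal < (ρ : ℝ).toNNReal := by exact_mod_cast g2
        have h4 : (σ : ℝ) < (ρ : ℝ) := by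
          by_contra h5
          exact absurd (Real.toNNReal_mono (not_lt.1 h5)) (not_le.2 h3)
        exact_mod_cast h4
      refine mem_iUnion.2 ⟨(σ, ρ), ?_⟩
      simp only [hB]
      rw [if_pos ⟨hσ0, hσρ⟩]
      refine ⟨?_, ?_, hxU⟩
      · show ENNReal.ofReal (ρ : ℝ) ≤ f₁ x
        exact le_of_lt h2
      · show f₂ x < ENNReal.ofReal (σ : ℝ)
        exact g1
    have hsub0 : ν (⋃ pr, B pr) = 0 := RNAux.null_iUnion hν.1 hνlc hνna hBm hB0
    have hm1 : MeasurableSet ({x | f₂ x < f₁ x} ∩ Un n) :=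
      (measurableSet_lt h2m h1m).inter (hUnm n)
    exact le_antisymm
      (le_trans (hν.2 _ _ hm1 (MeasurableSet.iUnion hBm) hcover) hsub0.le) (zero_le)
  have hn : ∀ n, ν ({x | f x ≠ g x} ∩ Un n) = 0 := by
    intro n
    have hsplit : {x | f x ≠ g x} ∩ Un n
        = ({x | g x < f x} ∩ Un n) ∪ ({x | f x < g x} ∩ Un n) := by
      ext x
      simp only [mem_inter_iff, mem_union, mem_setOf_eq]
      constructor
      · rintro ⟨hne, hU⟩
        rcases lt_or_gt_of_ne hne with h | h
        · exact Or.inr ⟨h, hU⟩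
        · exact Or.inl ⟨h, hU⟩
      · rintro (⟨h, hU⟩ | ⟨h, hU⟩)
        exacts [⟨h.ne', hU⟩, ⟨h.ne, hU⟩]
    rw [hsplit, hνna _ _ ((measurableSet_lt hgm hfm).inter (hUnm n))
      ((measurableSet_lt hfm hgm).inter (hUnm n)) (key g f hgm hfm hgr hrep n)]
    exact key f g hfm hgm hrep hgr n
  have hcup : {x | f x ≠ g x} = ⋃ n, ({x | f x ≠ g x} ∩ Un n) := by
    rw [← inter_iUnion, hUn, inter_univ]
  have hne2 : {x | f x ≠ g x} = {x | f x < g x} ∪ {x | g x < f x} := by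
    ext x
    simp only [mem_setOf_eq, mem_union]
    exact ⟨fun h => lt_or_gt_of_ne h, fun h => h.elim (fun h => h.ne) (fun h => h.ne')⟩
  have hnem : ∀ n, MeasurableSet ({x | f x ≠ g x} ∩ Un n) := fun n => by
    rw [hne2]
    exact ((measurableSet_lt hfm hgm).union (measurableSet_lt hgm hfm)).inter (hUnm n)
  rw [hcup]
  exact RNAux.null_iUnion_nat hνlc hνna hnem hn
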